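/- Let σ : ℝ → ℝ satisfy: (1) σ(x) = x for all x ≥ 0 and σ(x) < 0 for all x < 0; and (2) for every c < 0 there exists b ∈ [0,1) such that 0 ≤ σ(x)/x ≤ b for all x ∈ (−∞, c]. Then for every fixed x < 0 the iterates σⁿ(x) (the n-fold composition of σ applied to x) converge to 0 as n → ∞; consequently, for every x ∈ ℝ, lim_{n→∞} σⁿ(x) = ReLU(x) = max(x, 0). -/
import Mathlib


/-- if `σ(x) = x` for `x ≥ 0`, `σ(x) < 0` for `x < 0`, and for every `c < 0`
there is `b ∈ [0,1)` with `0 ≤ σ(x)/x ≤ b` on `(−∞, c]`, then the iterates `σⁿ(x)` converge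
to `0` for every fixed `x < 0`; consequently `σⁿ(x) → ReLU(x) = max(x,0)` for every `x`. -/
theorem iterates_tendsto_relu (σ : ℝ → ℝ)
    (h1 : ∀ x : ℝ, 0 ≤ x → σ x = x) (h1' : ∀ x : ℝ, x < 0 → σ x < 0)
    (h2 : ∀ c : ℝ, c < 0 → ∃ b : ℝ, 0 ≤ b ∧ b < 1 ∧
      ∀ x : ℝ, x ≤ c → 0 ≤ σ x / x ∧ σ x / x ≤ b) :
    (∀ x : ℝ, x < 0 → Filter.Tendsto (fun n => σ^[n] x) Filter.atTop (nhds 0)) ∧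
    (∀ x : ℝ, Filter.Tendsto (fun n => σ^[n] x) Filter.atTop (nhds (max x 0))) := by
  -- Step lemma: for y < 0, y < σ y < 0.
  have step : ∀ y : ℝ, y < 0 → y < σ y ∧ σ y < 0 := by
    intro y hy
    obtain ⟨b, hb0, hb1, hb⟩ := h2 y hy
    have hr := hb y le_rfl
    have hylt : σ y / y < 1 := lt_of_le_of_lt hr.2 hb1
    have hyne : y ≠ 0 := ne_of_lt hy
    have : σ y = (σ y / y) * y := (div_mul_cancel₀ _ hyne).symm
    constructor
    · have := mul_lt_mul_of_neg_right hylt hy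
      rw [one_mul] at this
      linarith [this, (div_mul_cancel₀ (σ y) hyne)]
    · exact h1' y hy
  have main : ∀ x : ℝ, x < 0 → Filter.Tendsto (fun n => σ^[n] x) Filter.atTop (nhds 0) := by
    intro x hx
    -- all iterates negative
    have hneg : ∀ n, σ^[n] x < 0 := by
      intro n
      induction n with
      | zero => simpa using hx
      | succ n ih =>
        rw [Function.iterate_succ_apply']
        exact (step _ ih).2
    have hmono : Monotone fun n => σ^[n] x := by
      apply monotone_nat_of_le_succ
      intro n
      rw [Function.iterate_succ_apply']
      exact le_of_lt (step _ (hneg n)).1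
    have hbdd : BddAbove (Set.range fun n => σ^[n] x) := by
      refine ⟨0, ?_⟩
      rintro _ ⟨n, rfl⟩
      exact le_of_lt (hneg n)
    have htend : Filter.Tendsto (fun n => σ^[n] x) Filter.atTop (nhds (⨆ n, σ^[n] x)) :=
      tendsto_atTop_ciSup hmono hbdd
    set L := ⨆ n, σ^[n] x with hL
    have hLle : L ≤ 0 := ciSup_le fun n => le_of_lt (hneg n)
    have hleL : ∀ n, σ^[n] x ≤ L := fun n => le_ciSup hbdd n
    rcases eq_or_lt_of_le hLle with hL0 | hL0
    · rwa [hL0] at htend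
    · exfalso
      obtain ⟨b, hb0, hb1, hb⟩ := h2 L hL0
      -- b^n * x ≤ σ^[n] x
      have hgeo : ∀ n, b ^ n * x ≤ σ^[n] x := by
        intro n
        induction n with
        | zero => simp
        | succ n ih =>
          rw [Function.iterate_succ_apply', pow_succ]
          have hxn := hneg n
          have hxne : σ^[n] x ≠ 0 := ne_of_lt hxn
          have hr := hb (σ^[n] x) (hleL n)
          have h1 : b * σ^[n] x ≤ (σ (σ^[n] x) / σ^[n] x) * σ^[n] x :=
            mul_le_mul_of_nonpos_right hr.2 (le_of_lt hxn)
          rw [div_mul_cancel₀ _ hxne] at h1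
          have h2' : b ^ n * b * x ≤ b * σ^[n] x := by
            have : b * (b ^ n * x) ≤ b * σ^[n] x := mul_le_mul_of_nonneg_left ih hb0
            linarith [this]
          linarith
      have htend0 : Filter.Tendsto (fun n => b ^ n * x) Filter.atTop (nhds 0) := by
        have := (tendsto_pow_atTop_nhds_zero_of_lt_one hb0 hb1).mul_const x
        simpa using this
      have hev : ∀ᶠ n in Filter.atTop, L < b ^ n * x :=
        htend0.eventually_const_lt hL0
      obtain ⟨n, hn⟩ := hev.exists
      exact absurd (le_trans (hgeo n) (hleL n)) (not_le.mpr hn)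
  refine ⟨main, fun x => ?_⟩
  rcases lt_or_ge x 0 with hx | hx
  · rw [max_eq_right (le_of_lt hx)]
    exact main x hx
  · have hconst : ∀ n, σ^[n] x = x := by
      intro n
      induction n with
      | zero => simp
      | succ n ih => rw [Function.iterate_succ_apply', ih, h1 x hx]
    rw [max_eq_left hx]
    simp only [hconst]
    exact tendsto_const_nhds
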